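/- Fix θ ∈ (−1,0)∪(0,∞). Suppose v : 𝒴 → ℝ satisfies v(y) ≥ 1 for all y, min_y v(y) = 1, and Σ_y v(y)·K_θ(y|y') = κ·v(y') for all y' and some κ > 0. Let w(y) := [Σ_x P_{X₁Y₁}(x,y)^{1+θ}]^{1/(1+θ)} and ⟨v,w⟩ := Σ_y v(y)w(y). Then for every n ≥ 1: (n−1)·(−log κ) − log⟨v,w⟩ ≤ (θ/(1+θ))·H↑_{1+θ}(Xⁿ|Yⁿ) ≤ (n−1)·(−log κ) − log⟨v,w⟩ + log max_y v(y). -/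

import Mathlib

open Real Filter

/-- Joint distribution of a Markov chain of length `m+1` with initial distribution `P1`
and transition matrix `W` (where `W p p'` is the probability of moving from `p'` to `p`). -/
noncomputable def chainProb {𝒳 𝒴 : Type*} (W : 𝒳 × 𝒴 → 𝒳 × 𝒴 → ℝ) (P1 : 𝒳 × 𝒴 → ℝ)
    (m : ℕ) (z : Fin (m + 1) → 𝒳 × 𝒴) : ℝ :=
  P1 (z 0) * ∏ i : Fin m, W (z i.succ) (z i.castSucc)

/-- `(θ/(1+θ)) · H↑_{1+θ}(Xⁿ|Yⁿ)` for the length-`(m+1)` Markov chain. -/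
noncomputable def thetaCondRenyiUpChain {𝒳 𝒴 : Type*} [Fintype 𝒳] [Fintype 𝒴]
    (W : 𝒳 × 𝒴 → 𝒳 × 𝒴 → ℝ) (P1 : 𝒳 × 𝒴 → ℝ) (θ : ℝ) (m : ℕ) : ℝ :=
  -Real.log (∑ yn : Fin (m + 1) → 𝒴,
    (∑ xn : Fin (m + 1) → 𝒳,
      chainProb W P1 m (fun i => (xn i, yn i)) ^ (1 + θ)) ^ (1 / (1 + θ)))

lemma chainProb_nonneg {𝒳 𝒴 : Type*} (W : 𝒳 × 𝒴 → 𝒳 × 𝒴 → ℝ) (hW0 : ∀ p p', 0 ≤ W p p')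
    (P1 : 𝒳 × 𝒴 → ℝ) (hP0 : ∀ p, 0 ≤ P1 p) (m : ℕ) (z : Fin (m + 1) → 𝒳 × 𝒴) :
    0 ≤ chainProb W P1 m z :=
  mul_nonneg (hP0 _) (Finset.prod_nonneg fun _ _ => hW0 _ _)

lemma myInnerSum {𝒳 𝒴 : Type*} [Fintype 𝒳] [Fintype 𝒴]
    (W : 𝒳 × 𝒴 → 𝒳 × 𝒴 → ℝ) (hW0 : ∀ p p', 0 ≤ W p p')
    (P1 : 𝒳 × 𝒴 → ℝ) (hP0 : ∀ p, 0 ≤ P1 p)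
    (θ : ℝ) (Wt : 𝒴 → 𝒴 → ℝ)
    (hSNH : ∀ (x' : 𝒳) (y y' : 𝒴), ∑ x : 𝒳, W (x, y) (x', y') ^ (1 + θ) = Wt y y') :
    ∀ (m : ℕ) (yn : Fin (m + 1) → 𝒴),
      ∑ xn : Fin (m + 1) → 𝒳, chainProb W P1 m (fun i => (xn i, yn i)) ^ (1 + θ)
      = (∑ x : 𝒳, P1 (x, yn 0) ^ (1 + θ)) * ∏ i : Fin m, Wt (yn i.succ) (yn i.castSucc) := by
  intro m
  induction m with
  | zero =>
    intro yn
    rw [show (∏ i : Fin 0, Wt (yn i.succ) (yn i.castSucc)) = 1 from Finset.prod_empty, mul_one]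
    exact Fintype.sum_equiv (Equiv.funUnique (Fin 1) 𝒳) _ _ (fun xn => by simp [chainProb])
  | succ m ih =>
    intro yn
    have key : ∀ xn : Fin (m + 2) → 𝒳,
        chainProb W P1 (m + 1) (fun i => (xn i, yn i)) ^ (1 + θ)
        = chainProb W P1 m (fun i => (xn i.castSucc, yn i.castSucc)) ^ (1 + θ)
          * W (xn (Fin.last (m + 1)), yn (Fin.last (m + 1)))
              (xn ((Fin.last m).castSucc), yn ((Fin.last m).castSucc)) ^ (1 + θ) := by
      intro xn
      rw [← Real.mul_rpow (chainProb_nonneg W hW0 P1 hP0 m _) (hW0 _ _)]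
      congr 1
      unfold chainProb
      rw [Fin.prod_univ_castSucc]
      simp [Fin.succ_castSucc, mul_assoc, Fin.succ_last, -Fin.castSucc_succ]
    rw [Finset.sum_congr rfl fun xn _ => key xn]
    rw [← (Fin.snocEquiv (fun _ : Fin (m + 2) => 𝒳)).sum_comp]
    rw [Fintype.sum_prod_type]
    simp only [Fin.snocEquiv_apply, Fin.snoc_castSucc, Fin.snoc_last]
    rw [Finset.sum_comm]
    have step : ∀ xs : Fin (m + 1) → 𝒳,
        ∑ x : 𝒳, chainProb W P1 m (fun i => (xs i, yn i.castSucc)) ^ (1 + θ)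
          * W (x, yn (Fin.last (m + 1))) (xs (Fin.last m), yn ((Fin.last m).castSucc)) ^ (1 + θ)
        = chainProb W P1 m (fun i => (xs i, yn i.castSucc)) ^ (1 + θ)
          * Wt (yn (Fin.last (m + 1))) (yn ((Fin.last m).castSucc)) := by
      intro xs
      rw [← Finset.mul_sum, hSNH]
    rw [Finset.sum_congr rfl fun xs _ => step xs, ← Finset.sum_mul, ih (fun i => yn i.castSucc)]
    rw [Fin.prod_univ_castSucc]
    simp [Fin.succ_castSucc, Fin.succ_last, -Fin.castSucc_succ]
    ring

lemma myPathEigen {𝒴 : Type*} [Fintype 𝒴]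
    (K : 𝒴 → 𝒴 → ℝ) (v : 𝒴 → ℝ) (κ : ℝ) (g : 𝒴 → ℝ)
    (heig : ∀ y' : 𝒴, ∑ y : 𝒴, v y * K y y' = κ * v y') :
    ∀ m : ℕ,
      ∑ yn : Fin (m + 1) → 𝒴,
        (g (yn 0) * ∏ i : Fin m, K (yn i.succ) (yn i.castSucc)) * v (yn (Fin.last m))
      = κ ^ m * ∑ y : 𝒴, v y * g y := by
  intro m
  induction m with
  | zero =>
    rw [pow_zero, one_mul]
    exact Fintype.sum_equiv (Equiv.funUnique (Fin 1) 𝒴) _ _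
      (fun yn => by simp [Fin.last, mul_comm])
  | succ m ih =>
    rw [← (Fin.snocEquiv (fun _ : Fin (m + 2) => 𝒴)).sum_comp]
    rw [Fintype.sum_prod_type]
    simp only [Fin.snocEquiv_apply]
    rw [Finset.sum_comm]
    have key : ∀ z : Fin (m + 1) → 𝒴,
        ∑ x : 𝒴, (g ((Fin.snoc z x : Fin (m + 2) → 𝒴) 0)
            * ∏ i : Fin (m + 1), K ((Fin.snoc z x : Fin (m + 2) → 𝒴) i.succ)
                ((Fin.snoc z x : Fin (m + 2) → 𝒴) i.castSucc))
          * v ((Fin.snoc z x : Fin (m + 2) → 𝒴) (Fin.last (m + 1)))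
        = κ * ((g (z 0) * ∏ i : Fin m, K (z i.succ) (z i.castSucc)) * v (z (Fin.last m))) := by
      intro z
      have hz0 : ∀ x : 𝒴, (Fin.snoc z x : Fin (m + 2) → 𝒴) 0 = z 0 := by
        intro x
        have h0 : (0 : Fin (m + 2)) = Fin.castSucc 0 := rfl
        rw [h0, Fin.snoc_castSucc]
      have hprod : ∀ x : 𝒴,
          ∏ i : Fin (m + 1), K ((Fin.snoc z x : Fin (m + 2) → 𝒴) i.succ)
              ((Fin.snoc z x : Fin (m + 2) → 𝒴) i.castSucc)
          = (∏ i : Fin m, K (z i.succ) (z i.castSucc)) * K x (z (Fin.last m)) := by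
        intro x
        rw [Fin.prod_univ_castSucc]
        congr 1
        · apply Finset.prod_congr rfl
          intro i _
          rw [Fin.succ_castSucc, Fin.snoc_castSucc, Fin.snoc_castSucc]
        · rw [Fin.succ_last, Fin.snoc_last, Fin.snoc_castSucc]
      calc ∑ x : 𝒴, (g ((Fin.snoc z x : Fin (m + 2) → 𝒴) 0)
            * ∏ i : Fin (m + 1), K ((Fin.snoc z x : Fin (m + 2) → 𝒴) i.succ)
                ((Fin.snoc z x : Fin (m + 2) → 𝒴) i.castSucc))
          * v ((Fin.snoc z x : Fin (m + 2) → 𝒴) (Fin.last (m + 1)))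
          = ∑ x : 𝒴, (g (z 0) * ∏ i : Fin m, K (z i.succ) (z i.castSucc))
              * (v x * K x (z (Fin.last m))) := by
            apply Finset.sum_congr rfl
            intro x _
            rw [hz0 x, hprod x, Fin.snoc_last]
            ring
        _ = (g (z 0) * ∏ i : Fin m, K (z i.succ) (z i.castSucc))
              * (κ * v (z (Fin.last m))) := by rw [← Finset.mul_sum, heig]
        _ = _ := by ring
    rw [Finset.sum_congr rfl fun z _ => key z, ← Finset.mul_sum, ih]
    ring

theorem chain_thetaCondRenyiUp_finite_bounds {𝒳 𝒴 : Type*} [Fintype 𝒳] [Fintype 𝒴]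
    (W : 𝒳 × 𝒴 → 𝒳 × 𝒴 → ℝ) (hW0 : ∀ p p', 0 ≤ W p p')
    (hW1 : ∀ p', ∑ p : 𝒳 × 𝒴, W p p' = 1)
    (Wt : ℝ → 𝒴 → 𝒴 → ℝ)
    (hSNH : ∀ t : ℝ, -1 < t → ∀ (x' : 𝒳) (y y' : 𝒴),
      ∑ x : 𝒳, W (x, y) (x', y') ^ (1 + t) = Wt t y y')
    (θ : ℝ) (hθ : θ ∈ Set.Ioo (-1 : ℝ) 0 ∪ Set.Ioi 0)
    (P1 : 𝒳 × 𝒴 → ℝ) (hP0 : ∀ p, 0 ≤ P1 p) (hP1 : ∑ p : 𝒳 × 𝒴, P1 p = 1)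
    (v : 𝒴 → ℝ) (κ : ℝ) (hκ : 0 < κ)
    (hv_ge : ∀ y, 1 ≤ v y) (hv_min : ∃ y, v y = 1)
    (heig : ∀ y' : 𝒴, ∑ y : 𝒴, v y * Wt θ y y' ^ (1 / (1 + θ)) = κ * v y') :
    ∀ m : ℕ,
      (m : ℝ) * (-Real.log κ)
          - Real.log (∑ y : 𝒴, v y * (∑ x : 𝒳, P1 (x, y) ^ (1 + θ)) ^ (1 / (1 + θ)))
        ≤ thetaCondRenyiUpChain W P1 θ m
      ∧ thetaCondRenyiUpChain W P1 θ m
        ≤ (m : ℝ) * (-Real.log κ)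
          - Real.log (∑ y : 𝒴, v y * (∑ x : 𝒳, P1 (x, y) ^ (1 + θ)) ^ (1 / (1 + θ)))
          + Real.log (⨆ y : 𝒴, v y) := by
  intro m
  -- basic facts about θ
  have hθ1 : -1 < θ := by
    rcases hθ with h | h
    · exact h.1
    · linarith [Set.mem_Ioi.mp h]
  have h1θ : (0 : ℝ) < 1 + θ := by linarith
  -- define g and K
  set g : 𝒴 → ℝ := fun y => (∑ x : 𝒳, P1 (x, y) ^ (1 + θ)) ^ (1 / (1 + θ)) with hg_def
  set K : 𝒴 → 𝒴 → ℝ := fun y y' => Wt θ y y' ^ (1 / (1 + θ)) with hK_def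
  have hg0 : ∀ y, 0 ≤ g y := fun y =>
    Real.rpow_nonneg (Finset.sum_nonneg fun x _ => Real.rpow_nonneg (hP0 _) _) _
  have hK0 : ∀ y y', 0 ≤ K y y' := fun y y' => by
    rcases isEmpty_or_nonempty 𝒳 with hE | hNE
    · exfalso
      have : (∑ p : 𝒳 × 𝒴, P1 p) = 0 := by
        apply Finset.sum_eq_zero
        intro p _
        exact (hE.false p.1).elim
      rw [this] at hP1; norm_num at hP1
    · exact Real.rpow_nonneg (by
        rw [← hSNH θ hθ1 (Classical.arbitrary 𝒳) y y']
        exact Finset.sum_nonneg fun x _ => Real.rpow_nonneg (hW0 _ _) _) _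
  -- the inner sum factorization
  have hinner : ∀ yn : Fin (m + 1) → 𝒴,
      (∑ xn : Fin (m + 1) → 𝒳, chainProb W P1 m (fun i => (xn i, yn i)) ^ (1 + θ))
          ^ (1 / (1 + θ))
      = g (yn 0) * ∏ i : Fin m, K (yn i.succ) (yn i.castSucc) := by
    intro yn
    rw [myInnerSum W hW0 P1 hP0 θ (Wt θ) (hSNH θ hθ1) m yn]
    rw [Real.mul_rpow (Finset.sum_nonneg fun x _ => Real.rpow_nonneg (hP0 _) _)
      (Finset.prod_nonneg fun i _ => by
        rcases isEmpty_or_nonempty 𝒳 with hE | hNE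
        · exfalso
          have : (∑ p : 𝒳 × 𝒴, P1 p) = 0 := by
            apply Finset.sum_eq_zero
            intro p _
            exact (hE.false p.1).elim
          rw [this] at hP1; norm_num at hP1
        · rw [← hSNH θ hθ1 (Classical.arbitrary 𝒳)]
          exact Finset.sum_nonneg fun x _ => Real.rpow_nonneg (hW0 _ _) _)]
    congr 1
    rw [← Real.finset_prod_rpow _ _ (fun i _ => by
        rcases isEmpty_or_nonempty 𝒳 with hE | hNE
        · exfalso
          have : (∑ p : 𝒳 × 𝒴, P1 p) = 0 := by
            apply Finset.sum_eq_zero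
            intro p _
            exact (hE.false p.1).elim
          rw [this] at hP1; norm_num at hP1
        · rw [← hSNH θ hθ1 (Classical.arbitrary 𝒳)]
          exact Finset.sum_nonneg fun x _ => Real.rpow_nonneg (hW0 _ _) _)]
  -- the outer sum
  set S : ℝ := ∑ yn : Fin (m + 1) → 𝒴,
      (∑ xn : Fin (m + 1) → 𝒳, chainProb W P1 m (fun i => (xn i, yn i)) ^ (1 + θ))
        ^ (1 / (1 + θ)) with hS_def
  have hS_eq : S = ∑ yn : Fin (m + 1) → 𝒴,
      g (yn 0) * ∏ i : Fin m, K (yn i.succ) (yn i.castSucc) :=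
    Finset.sum_congr rfl fun yn _ => hinner yn
  -- eigen identity
  have heigen := myPathEigen K v κ g heig m
  -- positivity of A = ∑ v * g
  set A : ℝ := ∑ y : 𝒴, v y * g y with hA_def
  have hApos : 0 < A := by
    obtain ⟨p0, hp0⟩ : ∃ p, 0 < P1 p := by
      by_contra h
      push_neg at h
      have : (∑ p : 𝒳 × 𝒴, P1 p) = 0 :=
        Finset.sum_eq_zero fun p _ => le_antisymm (h p) (hP0 p)
      rw [this] at hP1; norm_num at hP1
    obtain ⟨x0, y0⟩ := p0
    have hgy0 : 0 < g y0 := by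
      apply Real.rpow_pos_of_pos
      have h1 : (0 : ℝ) < P1 (x0, y0) ^ (1 + θ) := Real.rpow_pos_of_pos hp0 _
      calc (0 : ℝ) < P1 (x0, y0) ^ (1 + θ) := h1
        _ ≤ ∑ x : 𝒳, P1 (x, y0) ^ (1 + θ) :=
          Finset.single_le_sum (f := fun x => P1 (x, y0) ^ (1 + θ)) (fun x _ => Real.rpow_nonneg (hP0 _) _) (Finset.mem_univ x0)
    calc (0 : ℝ) < v y0 * g y0 := mul_pos (lt_of_lt_of_le one_pos (hv_ge y0)) hgy0
      _ ≤ A := Finset.single_le_sum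
          (fun y _ => mul_nonneg (le_trans zero_le_one (hv_ge y)) (hg0 y)) (Finset.mem_univ y0)
  -- V = sup v
  obtain ⟨ymin, hymin⟩ := hv_min
  have hNE𝒴 : Nonempty 𝒴 := ⟨ymin⟩
  set V : ℝ := ⨆ y : 𝒴, v y with hV_def
  have hvV : ∀ y, v y ≤ V := fun y =>
    le_ciSup (Set.Finite.bddAbove (Set.finite_range v)) y
  have hV1 : 1 ≤ V := le_trans (hv_ge ymin) (hvV ymin)
  have hVpos : 0 < V := lt_of_lt_of_le one_pos hV1
  -- sandwich S
  have hSub : S ≤ κ ^ m * A := by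
    rw [hS_eq, ← heigen]
    apply Finset.sum_le_sum
    intro yn _
    have ht : 0 ≤ g (yn 0) * ∏ i : Fin m, K (yn i.succ) (yn i.castSucc) :=
      mul_nonneg (hg0 _) (Finset.prod_nonneg fun i _ => hK0 _ _)
    exact le_mul_of_one_le_right ht (hv_ge _)
  have hSlb : κ ^ m * A ≤ V * S := by
    rw [hS_eq, ← heigen, Finset.mul_sum]
    apply Finset.sum_le_sum
    intro yn _
    have ht : 0 ≤ g (yn 0) * ∏ i : Fin m, K (yn i.succ) (yn i.castSucc) :=
      mul_nonneg (hg0 _) (Finset.prod_nonneg fun i _ => hK0 _ _)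
    calc (g (yn 0) * ∏ i : Fin m, K (yn i.succ) (yn i.castSucc)) * v (yn (Fin.last m))
        ≤ (g (yn 0) * ∏ i : Fin m, K (yn i.succ) (yn i.castSucc)) * V :=
          mul_le_mul_of_nonneg_left (hvV _) ht
      _ = V * (g (yn 0) * ∏ i : Fin m, K (yn i.succ) (yn i.castSucc)) := mul_comm _ _
  have hκmA : 0 < κ ^ m * A := mul_pos (pow_pos hκ m) hApos
  have hSpos : 0 < S := by
    nlinarith [hκmA, hVpos, hSlb]
  -- conclude with logs
  have hH : thetaCondRenyiUpChain W P1 θ m = -Real.log S := rfl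
  have hlog_prod : Real.log (κ ^ m * A) = (m : ℝ) * Real.log κ + Real.log A := by
    rw [Real.log_mul (ne_of_gt (pow_pos hκ m)) (ne_of_gt hApos), Real.log_pow]
  constructor
  · have h1 : Real.log S ≤ Real.log (κ ^ m * A) := Real.log_le_log hSpos hSub
    rw [hH]
    rw [hlog_prod] at h1
    linarith
  · have hge : κ ^ m * A / V ≤ S := by
      rw [div_le_iff₀ hVpos]
      linarith [hSlb]
    have h2 : Real.log (κ ^ m * A / V) ≤ Real.log S :=
      Real.log_le_log (div_pos hκmA hVpos) hge
    rw [Real.log_div (ne_of_gt hκmA) (ne_of_gt hVpos), hlog_prod] at h2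
    rw [hH]
    linarith
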